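/- Let n be a positive integer and let S = [[λ, μ], [ν, ρ]] be a complex symplectic 2n×2n matrix (Sᵀ J S = J with J = [[0, I], [−I, 0]]) which maps K-positive vectors to K-positive vectors, i.e. for every v ∈ ℂ^{2n} with vᴴ K v > 0 one has (Sv)ᴴ K (Sv) > 0, where K = [[I, 0], [0, −I]]. Then: (a) λ is invertible; (b) νλ⁻¹ is symmetric; (c) I − (νλ⁻¹)ᴴ(νλ⁻¹) is positive definite (equivalently, the operator norm of νλ⁻¹ is strictly less than 1); and (d) ρ = (λ⁻¹)ᵀ + νλ⁻¹μ. -/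

import Mathlib

open Matrix
open scoped ComplexOrder

private lemma star_sum_elim {α : Type*} [Star α] {m k : Type*} (a : m → α) (b : k → α) :
    star (Sum.elim a b) = Sum.elim (star a) (star b) := by
  funext i; cases i <;> rfl

/-- If `S = [[λ, μ], [ν, ρ]]` is complex symplectic and maps `K`-positive
vectors to `K`-positive vectors (`K = [[I, 0], [0, −I]]`), then `λ` is invertible,
`νλ⁻¹` is symmetric, `I − (νλ⁻¹)ᴴ(νλ⁻¹)` is positive definite, and
`ρ = (λ⁻¹)ᵀ + νλ⁻¹μ`. -/
theorem semigroup_element_block_properties (n : ℕ) (hn : 0 < n)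
    (lam mu nu rho : Matrix (Fin n) (Fin n) ℂ)
    (hS : (fromBlocks lam mu nu rho)ᵀ *
        fromBlocks (0 : Matrix (Fin n) (Fin n) ℂ) (1 : Matrix (Fin n) (Fin n) ℂ)
          (-1 : Matrix (Fin n) (Fin n) ℂ) (0 : Matrix (Fin n) (Fin n) ℂ) *
        fromBlocks lam mu nu rho =
      fromBlocks (0 : Matrix (Fin n) (Fin n) ℂ) (1 : Matrix (Fin n) (Fin n) ℂ)
        (-1 : Matrix (Fin n) (Fin n) ℂ) (0 : Matrix (Fin n) (Fin n) ℂ))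
    (hpos : ∀ v : (Fin n ⊕ Fin n) → ℂ,
      0 < star v ⬝ᵥ ((fromBlocks (1 : Matrix (Fin n) (Fin n) ℂ) 0 0
          (-1 : Matrix (Fin n) (Fin n) ℂ)) *ᵥ v) →
      0 < star ((fromBlocks lam mu nu rho) *ᵥ v) ⬝ᵥ
        ((fromBlocks (1 : Matrix (Fin n) (Fin n) ℂ) 0 0
          (-1 : Matrix (Fin n) (Fin n) ℂ)) *ᵥ ((fromBlocks lam mu nu rho) *ᵥ v))) :
    IsUnit lam ∧
    (nu * lam⁻¹)ᵀ = nu * lam⁻¹ ∧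
    (1 - (nu * lam⁻¹)ᴴ * (nu * lam⁻¹)).PosDef ∧
    rho = (lam⁻¹)ᵀ + nu * lam⁻¹ * mu := by
  -- block identities
  rw [fromBlocks_transpose, fromBlocks_multiply, fromBlocks_multiply] at hS
  simp only [Matrix.mul_zero, Matrix.mul_one, Matrix.mul_neg, zero_add, add_zero,
    Matrix.neg_mul] at hS
  rw [fromBlocks_inj] at hS
  obtain ⟨h1, h2, h3, h4⟩ := hS
  -- injectivity of lam
  have hinj : ∀ x : Fin n → ℂ, lam *ᵥ x = 0 → x = 0 := by
    intro x hx
    by_contra hx0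
    have hv : 0 < star (Sum.elim x (0 : Fin n → ℂ)) ⬝ᵥ
        ((fromBlocks (1 : Matrix (Fin n) (Fin n) ℂ) 0 0
          (-1 : Matrix (Fin n) (Fin n) ℂ)) *ᵥ Sum.elim x 0) := by
      simp only [fromBlocks_mulVec, one_mulVec, zero_mulVec, mulVec_zero, neg_mulVec,
        add_zero, zero_add, star_sum_elim, sumElim_dotProduct_sumElim, star_zero,
        zero_dotProduct, neg_zero, dotProduct_zero, Sum.elim_comp_inl, Sum.elim_comp_inr]
      exact dotProduct_star_self_pos_iff.mpr hx0
    have hp := hpos _ hv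
    simp only [fromBlocks_mulVec, one_mulVec, zero_mulVec, mulVec_zero, neg_mulVec,
      add_zero, zero_add, hx, star_sum_elim, sumElim_dotProduct_sumElim, star_zero,
      zero_dotProduct, neg_zero, dotProduct_zero, dotProduct_neg, Sum.elim_comp_inl, Sum.elim_comp_inr] at hp
    exact absurd (hp.trans_le (neg_nonpos.mpr (dotProduct_star_self_nonneg (nu *ᵥ x)))) (lt_irrefl 0)
  have hdet : lam.det ≠ 0 := by
    intro h
    obtain ⟨v, hv0, hv⟩ := (Matrix.exists_mulVec_eq_zero_iff).mpr h
    exact hv0 (hinj v hv)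
  have hU : IsUnit lam := (Matrix.isUnit_iff_isUnit_det _).mpr (isUnit_iff_ne_zero.mpr hdet)
  have hli : lam * lam⁻¹ = 1 := Matrix.mul_nonsing_inv _ (isUnit_iff_ne_zero.mpr hdet)
  have hil : lam⁻¹ * lam = 1 := Matrix.nonsing_inv_mul _ (isUnit_iff_ne_zero.mpr hdet)
  have hti : (lam⁻¹)ᵀ * lamᵀ = 1 := by rw [← Matrix.transpose_mul, hli, Matrix.transpose_one]
  have h1' : lamᵀ * nu = nuᵀ * lam := by
    rw [← sub_eq_zero, sub_eq_add_neg, add_comm]; exact h1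
  -- symmetry
  have hnut : nuᵀ = lamᵀ * (nu * lam⁻¹) := by
    rw [← Matrix.mul_assoc, h1', Matrix.mul_assoc, hli, Matrix.mul_one]
  have hsym : (nu * lam⁻¹)ᵀ = nu * lam⁻¹ := by
    rw [Matrix.transpose_mul, hnut, ← Matrix.mul_assoc, hti, Matrix.one_mul]
  refine ⟨hU, hsym, ?_, ?_⟩
  · -- positive definiteness
    rw [Matrix.posDef_iff_dotProduct_mulVec]
    constructor
    · unfold Matrix.IsHermitian
      simp only [Matrix.conjTranspose_sub, Matrix.conjTranspose_mul,
        Matrix.conjTranspose_one, Matrix.conjTranspose_conjTranspose]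
    · intro x hx0
      set W := nu * lam⁻¹ with hW
      set u := lam⁻¹ *ᵥ x with hu
      have hlu : lam *ᵥ u = x := by rw [hu, mulVec_mulVec, hli, one_mulVec]
      have hWu : W *ᵥ x = nu *ᵥ u := by rw [hu, mulVec_mulVec]
      have hu0 : u ≠ 0 := by
        intro h; apply hx0; rw [← hlu, h, mulVec_zero]
      have hv : 0 < star (Sum.elim u (0 : Fin n → ℂ)) ⬝ᵥ
          ((fromBlocks (1 : Matrix (Fin n) (Fin n) ℂ) 0 0
            (-1 : Matrix (Fin n) (Fin n) ℂ)) *ᵥ Sum.elim u 0) := by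
        simp only [fromBlocks_mulVec, one_mulVec, zero_mulVec, mulVec_zero, neg_mulVec,
          add_zero, zero_add, star_sum_elim, sumElim_dotProduct_sumElim, star_zero,
          zero_dotProduct, neg_zero, dotProduct_zero, Sum.elim_comp_inl, Sum.elim_comp_inr]
        exact dotProduct_star_self_pos_iff.mpr hu0
      have hp := hpos _ hv
      simp only [fromBlocks_mulVec, one_mulVec, zero_mulVec, mulVec_zero, neg_mulVec,
        add_zero, zero_add, hlu, star_sum_elim, sumElim_dotProduct_sumElim,
        dotProduct_neg, Sum.elim_comp_inl, Sum.elim_comp_inr] at hp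
      have key : star x ⬝ᵥ ((Wᴴ * W) *ᵥ x) = star (W *ᵥ x) ⬝ᵥ (W *ᵥ x) := by
        rw [← mulVec_mulVec, dotProduct_mulVec, ← star_mulVec]
      rw [Matrix.sub_mulVec, dotProduct_sub, Matrix.one_mulVec, key, hWu]
      rw [sub_pos]
      rw [← sub_pos] at hp
      simpa [sub_eq_add_neg] using hp
  · -- rho formula
    have h2' : lamᵀ * rho = 1 + nuᵀ * mu := by rw [← h2]; abel
    have hr : rho = (lam⁻¹)ᵀ * (1 + nuᵀ * mu) := by
      calc rho = ((lam⁻¹)ᵀ * lamᵀ) * rho := by rw [hti, Matrix.one_mul]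
        _ = (lam⁻¹)ᵀ * (lamᵀ * rho) := by rw [Matrix.mul_assoc]
        _ = _ := by rw [h2']
    rw [hr, Matrix.mul_add, Matrix.mul_one, ← Matrix.mul_assoc, ← Matrix.transpose_mul, hsym]
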